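/- arXiv:2502.06464 — 5 statements merged into one kernel-verified Lean document; each statement's English description precedes it below -/
import Mathlib

section
/- Let x, y ∈ {0,1}^{n×n} and let R(x,y) be the SR instance on 4n agents A ∪ B ∪ C ∪ D defined as follows: a_i prefers (in order) all b_j with x_{ij}=1, then c_i, then all others; b_j prefers all c_i with y_{ij}=1, then all a_i with y_{ij}=1, then d_j, then all others; c_i prefers a_i, then all agents of B, then all others; d_j prefers b_j, then all others. If x and y are disjoint (x_{ij} y_{ij} = 0 for all i, j), then the matching M = {{a_i, c_i} : i ∈ [n]} ∪ {{b_j, d_j} : j ∈ [n]} is stable. -/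
/-- A perfect matching on the agent set: an involution with no fixed points. -/
def IsMatching {S : Type*} (M : S → S) : Prop :=
  (∀ x, M (M x) = x) ∧ ∀ x, M x ≠ x

/-- `{u, v}` is a blocking pair for the matching `M` (lower rank = more preferred). -/
def Blocks {S : Type*} (rank : S → S → ℕ) (M : S → S) (u v : S) : Prop :=
  u ≠ v ∧ M u ≠ v ∧ rank u v < rank u (M u) ∧ rank v u < rank v (M v)

/-- A stable matching: a perfect matching with no blocking pair. -/
def IsStable {S : Type*} (rank : S → S → ℕ) (M : S → S) : Prop :=
  IsMatching M ∧ ∀ u v, ¬ Blocks rank M u v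

/-- Preference tiers of the instance `R(x,y)`: agent `(0,i)` is `aᵢ`, `(1,j)` is `bⱼ`,
`(2,i)` is `cᵢ`, `(3,j)` is `dⱼ`.  Lower tier = more preferred. -/
def Rtier {n : ℕ} (x y : Fin n → Fin n → Bool) (u v : Fin 4 × Fin n) : ℕ :=
  if u.1 = 0 then
    (if v.1 = 1 ∧ x u.2 v.2 = true then 0
     else if v.1 = 2 ∧ v.2 = u.2 then 1 else 2)
  else if u.1 = 1 then
    (if v.1 = 2 ∧ y v.2 u.2 = true then 0
     else if v.1 = 0 ∧ y v.2 u.2 = true then 1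
     else if v.1 = 3 ∧ v.2 = u.2 then 2 else 3)
  else if u.1 = 2 then
    (if v.1 = 0 ∧ v.2 = u.2 then 0 else if v.1 = 1 then 1 else 2)
  else
    (if v.1 = 1 ∧ v.2 = u.2 then 0 else 1)

/-- `rank` is a strict preference ranking consistent with the tier structure of `R(x,y)`
(ties inside a tier are broken arbitrarily). -/
def IsRPref {n : ℕ} (x y : Fin n → Fin n → Bool)
    (rank : Fin 4 × Fin n → Fin 4 × Fin n → ℕ) : Prop :=
  (∀ u v w, v ≠ u → w ≠ u → Rtier x y u v < Rtier x y u w → rank u v < rank u w) ∧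
  (∀ u v w, v ≠ u → w ≠ u → rank u v = rank u w → v = w)

/-- The matching `M₀ = {{aᵢ, cᵢ}} ∪ {{bⱼ, dⱼ}}`. -/
def M0 {n : ℕ} : Fin 4 × Fin n → Fin 4 × Fin n := fun u =>
  if u.1 = 0 then ((2 : Fin 4), u.2) else if u.1 = 1 then ((3 : Fin 4), u.2)
  else if u.1 = 2 then ((0 : Fin 4), u.2) else ((1 : Fin 4), u.2)

/-- If `x` and `y` are disjoint then `M₀` is a stable matching of `R(x,y)`. -/
theorem stmt3 {n : ℕ} (x y : Fin n → Fin n → Bool)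
    (rank : Fin 4 × Fin n → Fin 4 × Fin n → ℕ) (hpref : IsRPref x y rank)
    (hdisj : ∀ i j, ¬ (x i j = true ∧ y i j = true)) :
    IsStable rank (M0 (n := n)) := by
  have hfix : ∀ u : Fin 4 × Fin n, M0 u ≠ u := by
    rintro ⟨t, i⟩ h
    fin_cases t <;> simp_all [M0, Prod.ext_iff]
  refine ⟨⟨?_, hfix⟩, ?_⟩
  · rintro ⟨t, i⟩
    fin_cases t <;> simp [M0]
  · rintro u v ⟨huv, hMuv, h1, h2⟩
    have t1 : Rtier x y u v ≤ Rtier x y u (M0 u) := by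
      by_contra h
      exact absurd (hpref.1 u (M0 u) v (hfix u) (Ne.symm huv) (not_le.1 h))
        (not_lt.2 (le_of_lt h1))
    have t2 : Rtier x y v u ≤ Rtier x y v (M0 v) := by
      by_contra h
      exact absurd (hpref.1 v (M0 v) u (hfix v) huv (not_le.1 h))
        (not_lt.2 (le_of_lt h2))
    obtain ⟨t, i⟩ := u
    obtain ⟨s, j⟩ := v
    fin_cases t <;> fin_cases s <;>
      simp_all [M0, Rtier, Prod.ext_iff] <;>
      split_ifs at t1 t2 <;> simp_all
end

section
/- With R(x,y) as defined (the disjointness-embedding SR instance on 4n agents), if x and y are disjoint then M = {{a_i, c_i}} ∪ {{b_j, d_j}} is the unique stable matching of R(x,y). -/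
theorem key {n : ℕ} (x y : Fin n → Fin n → Bool)
    (hdisj : ∀ i j, ¬ (x i j = true ∧ y i j = true)) :
    ∀ u v : Fin 4 × Fin n, u ≠ v → M0 u ≠ v →
      Rtier x y u (M0 u) < Rtier x y u v ∨ Rtier x y v (M0 v) < Rtier x y v u := by
  rintro ⟨u1, i⟩ ⟨v1, j⟩ huv hMuv
  fin_cases u1 <;> fin_cases v1 <;>
    simp_all [M0, Rtier]
  · by_cases hx : x i j = true
    · simp [hx, hdisj i j hx]
    · simp [hx]
  · by_cases hx : x j i = true
    · simp [hx, hdisj j i hx]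
    · simp [hx]

theorem forced {n : ℕ} (x y : Fin n → Fin n → Bool)
    (M : Fin 4 × Fin n → Fin 4 × Fin n) (hinv : ∀ u, M (M u) = u) (hnf : ∀ u, M u ≠ u)
    (nb : ∀ u v, u ≠ v → M u ≠ v → Rtier x y u v < Rtier x y u (M u) →
      ¬ Rtier x y v u < Rtier x y v (M v))
    (k : Fin n) (hk : M ((2:Fin 4), k) ≠ ((0:Fin 4), k)) :
    ∃ m, M ((0:Fin 4), k) = ((1:Fin 4), m) ∧ x k m = true := by
  have hMa : M ((0:Fin 4), k) ≠ ((2:Fin 4), k) := by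
    intro h; exact hk (by rw [← h, hinv])
  have h1 : 1 ≤ Rtier x y ((2:Fin 4), k) (M ((2:Fin 4), k)) := by
    rcases hw : M ((2:Fin 4), k) with ⟨w1, m⟩
    rw [hw] at hk
    clear nb hinv hnf hMa hw
    fin_cases w1 <;> simp_all [Rtier]
  have h0 : Rtier x y ((2:Fin 4), k) ((0:Fin 4), k) = 0 := by simp [Rtier]
  have hcm := nb ((2:Fin 4), k) ((0:Fin 4), k) (by simp) hk (by omega)
  have h2 : Rtier x y ((0:Fin 4), k) ((2:Fin 4), k) = 1 := by simp [Rtier]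
  rw [h2] at hcm
  rcases hw : M ((0:Fin 4), k) with ⟨w1, m⟩
  rw [hw] at hcm hMa
  have hMa0 : ((w1, m) : Fin 4 × Fin n) ≠ ((0:Fin 4), k) := hw ▸ hnf ((0:Fin 4), k)
  clear nb hinv hnf h1 h0 h2 hk
  fin_cases w1 <;> simp_all [Rtier]
  by_cases hx : x k m = true
  · exact hx
  · simp [hx] at hcm

theorem forced2 {n : ℕ} (x y : Fin n → Fin n → Bool)
    (M : Fin 4 × Fin n → Fin 4 × Fin n) (hinv : ∀ u, M (M u) = u) (hnf : ∀ u, M u ≠ u)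
    (nb : ∀ u v, u ≠ v → M u ≠ v → Rtier x y u v < Rtier x y u (M u) →
      ¬ Rtier x y v u < Rtier x y v (M v))
    (m : Fin n) (hm : M ((1:Fin 4), m) ≠ ((3:Fin 4), m)) :
    ∃ i, (M ((1:Fin 4), m) = ((0:Fin 4), i) ∨ M ((1:Fin 4), m) = ((2:Fin 4), i))
      ∧ y i m = true := by
  have hdm : M ((3:Fin 4), m) ≠ ((1:Fin 4), m) := by
    intro h; exact hm (by rw [← h, hinv])
  have h1 : 1 ≤ Rtier x y ((3:Fin 4), m) (M ((3:Fin 4), m)) := by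
    rcases hw : M ((3:Fin 4), m) with ⟨w1, k⟩
    rw [hw] at hdm
    clear nb hinv hnf hw
    fin_cases w1 <;> simp_all [Rtier]
  have h0 : Rtier x y ((3:Fin 4), m) ((1:Fin 4), m) = 0 := by simp [Rtier]
  have hb := nb ((3:Fin 4), m) ((1:Fin 4), m) (by simp) hdm (by omega)
  have h3 : Rtier x y ((1:Fin 4), m) ((3:Fin 4), m) = 2 := by simp [Rtier]
  rw [h3] at hb
  rcases hw : M ((1:Fin 4), m) with ⟨w1, k⟩
  rw [hw] at hb hm
  clear nb hinv hnf h1 h0 h3 hdm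
  fin_cases w1 <;> simp_all [Rtier]
  · by_cases hy : y k m = true
    · exact hy
    · simp [hy] at hb
  · by_cases hy : y k m = true
    · exact hy
    · simp [hy] at hb

/-- If `x` and `y` are disjoint then `M₀` is the unique stable matching of `R(x,y)`. -/
theorem stmt4 {n : ℕ} (x y : Fin n → Fin n → Bool)
    (rank : Fin 4 × Fin n → Fin 4 × Fin n → ℕ) (hpref : IsRPref x y rank)
    (hdisj : ∀ i j, ¬ (x i j = true ∧ y i j = true)) :
    IsStable rank (M0 (n := n)) ∧
      ∀ M : Fin 4 × Fin n → Fin 4 × Fin n, IsStable rank M → M = M0 := by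
  obtain ⟨hp1, hp2⟩ := hpref
  have hM0inv : ∀ u : Fin 4 × Fin n, M0 (M0 u) = u := by
    rintro ⟨u1, i⟩; fin_cases u1 <;> simp [M0]
  have hM0nf : ∀ u : Fin 4 × Fin n, M0 u ≠ u := by
    rintro ⟨u1, i⟩; fin_cases u1 <;> simp [M0]
  constructor
  · refine ⟨⟨hM0inv, hM0nf⟩, ?_⟩
    rintro u v ⟨hne, hMne, h1, h2⟩
    have t1 : ¬ Rtier x y u (M0 u) < Rtier x y u v := by
      intro h
      have := hp1 u (M0 u) v (hM0nf u) (Ne.symm hne) h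
      omega
    have t2 : ¬ Rtier x y v (M0 v) < Rtier x y v u := by
      intro h
      have := hp1 v (M0 v) u (hM0nf v) hne h
      omega
    rcases key x y hdisj u v hne hMne with h | h
    exacts [t1 h, t2 h]
  · intro M hM
    obtain ⟨⟨hinv, hnf⟩, hnbl⟩ := hM
    have nb : ∀ u v, u ≠ v → M u ≠ v → Rtier x y u v < Rtier x y u (M u) →
        ¬ Rtier x y v u < Rtier x y v (M v) := by
      intro u v huv hMu h h2
      exact hnbl u v ⟨huv, hMu, hp1 u v (M u) (Ne.symm huv) (hnf u) h,
        hp1 v u (M v) huv (hnf v) h2⟩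
    have step1 : ∀ j : Fin n, M ((1:Fin 4), j) = ((3:Fin 4), j) := by
      intro j
      by_contra hbj
      obtain ⟨i, hcase, hy⟩ := forced2 x y M hinv hnf nb j hbj
      rcases hcase with hc | hc
      · -- M b_j = a_i, so M a_i = b_j, so M c_i ≠ a_i
        have hai : M ((0:Fin 4), i) = ((1:Fin 4), j) := by rw [← hc, hinv]
        have hci : M ((2:Fin 4), i) ≠ ((0:Fin 4), i) := by
          intro h
          have : M ((0:Fin 4), i) = ((2:Fin 4), i) := by rw [← h, hinv]
          rw [hai] at this; simp at this
        obtain ⟨m, hm1, hm2⟩ := forced x y M hinv hnf nb i hci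
        rw [hai] at hm1
        have : j = m := by simpa using hm1
        subst this
        exact hdisj i j ⟨hm2, hy⟩
      · -- M b_j = c_i, so M c_i = b_j ≠ a_i
        have hci : M ((2:Fin 4), i) ≠ ((0:Fin 4), i) := by
          intro h
          have : M ((0:Fin 4), i) = ((2:Fin 4), i) := by rw [← h, hinv]
          have h2 : M ((2:Fin 4), i) = ((1:Fin 4), j) := by rw [← hc, hinv]
          rw [h2] at h; simp at h
        obtain ⟨m, hm1, hm2⟩ := forced x y M hinv hnf nb i hci
        have hbm : M ((1:Fin 4), m) = ((0:Fin 4), i) := by rw [← hm1, hinv]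
        have hbm' : M ((1:Fin 4), m) ≠ ((3:Fin 4), m) := by rw [hbm]; simp
        obtain ⟨i', hcase', hy'⟩ := forced2 x y M hinv hnf nb m hbm'
        rcases hcase' with hc' | hc' <;> rw [hbm] at hc'
        · have : i' = i := by simpa using hc'.symm
          subst this
          exact hdisj i' m ⟨hm2, hy'⟩
        · simp at hc'
    have step2 : ∀ i : Fin n, M ((2:Fin 4), i) = ((0:Fin 4), i) := by
      intro i
      by_contra hci
      obtain ⟨m, hm1, hm2⟩ := forced x y M hinv hnf nb i hci
      have : M ((1:Fin 4), m) = ((0:Fin 4), i) := by rw [← hm1, hinv]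
      rw [step1 m] at this; simp at this
    funext u
    obtain ⟨u1, i⟩ := u
    fin_cases u1
    · show M ((0:Fin 4), i) = M0 ((0:Fin 4), i)
      have : M ((0:Fin 4), i) = ((2:Fin 4), i) := by rw [← step2 i, hinv]
      rw [this]; simp [M0]
    · show M ((1:Fin 4), i) = M0 ((1:Fin 4), i)
      rw [step1 i]; simp [M0]
    · show M ((2:Fin 4), i) = M0 ((2:Fin 4), i)
      rw [step2 i]; simp [M0]
    · show M ((3:Fin 4), i) = M0 ((3:Fin 4), i)
      have : M ((3:Fin 4), i) = ((1:Fin 4), i) := by rw [← step1 i, hinv]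
      rw [this]; simp [M0]
end

section
/- In the instance R(x,y) with x, y disjoint, for every i the pair {a_i, c_i} cannot be blocked by any pair of the form {a_i, b_j}: if x_{ij} = 1 then b_j does not prefer a_i to d_j (since y_{ij} = 0), and if x_{ij} = 0 then a_i does not prefer b_j to c_i. -/
/-- With `x, y` disjoint, no pair `{aᵢ, bⱼ}` blocks `M₀`: if `x i j = 1` then `bⱼ` does not
prefer `aᵢ` to `dⱼ`, and if `x i j = 0` then `aᵢ` does not prefer `bⱼ` to `cᵢ`. -/
theorem stmt6 {n : ℕ} (x y : Fin n → Fin n → Bool)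
    (rank : Fin 4 × Fin n → Fin 4 × Fin n → ℕ) (hpref : IsRPref x y rank)
    (hdisj : ∀ i j, ¬ (x i j = true ∧ y i j = true)) (i j : Fin n) :
    (x i j = true →
      ¬ rank ((1 : Fin 4), j) ((0 : Fin 4), i) < rank ((1 : Fin 4), j) ((3 : Fin 4), j)) ∧
    (x i j = false →
      ¬ rank ((0 : Fin 4), i) ((1 : Fin 4), j) < rank ((0 : Fin 4), i) ((2 : Fin 4), i)) ∧
    ¬ Blocks rank (M0 (n := n)) ((0 : Fin 4), i) ((1 : Fin 4), j) := by

  obtain ⟨hmono, _⟩ := hpref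
  have h1 : x i j = true →
      ¬ rank ((1 : Fin 4), j) ((0 : Fin 4), i) < rank ((1 : Fin 4), j) ((3 : Fin 4), j) := by
    intro hx hlt
    have hy : y i j = false := by
      cases hyv : y i j with
      | false => rfl
      | true => exact absurd ⟨hx, hyv⟩ (hdisj i j)
    have hne1 : ((3 : Fin 4), j) ≠ ((1 : Fin 4), j) := by
      intro h; simp at h
    have hne2 : ((0 : Fin 4), i) ≠ ((1 : Fin 4), j) := by
      intro h; simp at h
    have := hmono ((1 : Fin 4), j) ((3 : Fin 4), j) ((0 : Fin 4), i) hne1 hne2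
      (by simp [Rtier, hy])
    exact absurd hlt (Nat.lt_asymm this)
  have h2 : x i j = false →
      ¬ rank ((0 : Fin 4), i) ((1 : Fin 4), j) < rank ((0 : Fin 4), i) ((2 : Fin 4), i) := by
    intro hx hlt
    have hne1 : ((2 : Fin 4), i) ≠ ((0 : Fin 4), i) := by
      intro h; simp at h
    have hne2 : ((1 : Fin 4), j) ≠ ((0 : Fin 4), i) := by
      intro h; simp at h
    have := hmono ((0 : Fin 4), i) ((2 : Fin 4), i) ((1 : Fin 4), j) hne1 hne2
      (by simp [Rtier, hx])
    exact absurd hlt (Nat.lt_asymm this)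
  refine ⟨h1, h2, ?_⟩
  rintro ⟨-, -, hb1, hb2⟩
  have hMa : M0 (n := n) ((0 : Fin 4), i) = ((2 : Fin 4), i) := by simp [M0]
  have hMb : M0 (n := n) ((1 : Fin 4), j) = ((3 : Fin 4), j) := by
    simp [M0]
  rw [hMa] at hb1
  rw [hMb] at hb2
  cases hxv : x i j with
  | false => exact h2 hxv hb1
  | true => exact h1 hxv hb2
end

section
/- In the instance R(x,y) with x and y uniquely intersecting at (k,ℓ), no stable matching can contain the pair {b_ℓ, d_ℓ}: if {b_ℓ, d_ℓ} ∈ M then, considering a_k's partner in M, either {a_k, b_ℓ} blocks M, or a_k is matched above b_ℓ in its list which is impossible given the preference structure and stability constraints on other agents. -/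
/-- With `x, y` uniquely intersecting at `(k, l)`, no stable matching of `R(x,y)` contains the
pair `{b_l, d_l}`. -/
theorem stmt11 {n : ℕ} (x y : Fin n → Fin n → Bool)
    (rank : Fin 4 × Fin n → Fin 4 × Fin n → ℕ) (hpref : IsRPref x y rank)
    (k l : Fin n) (hx : x k l = true) (hy : y k l = true)
    (huniq : ∀ i j, (i, j) ≠ (k, l) → ¬ (x i j = true ∧ y i j = true))
    (M : Fin 4 × Fin n → Fin 4 × Fin n) (hM : IsStable rank M) :
    M ((1 : Fin 4), l) ≠ ((3 : Fin 4), l) := by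
  intro hbl
  obtain ⟨⟨hinv, hnf⟩, hstab⟩ := hM
  obtain ⟨hmono, hinj⟩ := hpref
  -- a_k's partner
  set m := M ((0 : Fin 4), k) with hm
  have hak_ne_bl : M ((0 : Fin 4), k) ≠ ((1 : Fin 4), l) := by
    intro h
    have := hinv ((0 : Fin 4), k)
    rw [h, hbl] at this
    exact absurd this (by simp [Prod.ext_iff])
  -- b_l prefers a_k to its partner d_l
  have hbl_pref : rank ((1 : Fin 4), l) ((0 : Fin 4), k)
      < rank ((1 : Fin 4), l) (M ((1 : Fin 4), l)) := by
    rw [hbl]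
    apply hmono _ _ _ (by simp) (by simp)
    simp [Rtier, hy]
  -- by stability, a_k's partner ranks strictly better than b_l
  have hnb := hstab ((0 : Fin 4), k) ((1 : Fin 4), l)
  have hrank_lt : rank ((0 : Fin 4), k) m < rank ((0 : Fin 4), k) ((1 : Fin 4), l) := by
    rcases lt_or_ge (rank ((0 : Fin 4), k) m) (rank ((0 : Fin 4), k) ((1 : Fin 4), l)) with h | h
    · exact h
    · exfalso
      rcases lt_or_eq_of_le h with h' | h'
      · exact hnb ⟨by simp, hak_ne_bl, h', hbl_pref⟩
      · have := hinj ((0 : Fin 4), k) ((1 : Fin 4), l) m (by simp)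
          (fun hc => hnf _ (hm ▸ hc)) h'
        rw [hm] at this
        exact hak_ne_bl this.symm
  -- hence m is in a_k's top tier: m = (1, j) with x k j = true
  have htier : Rtier x y ((0 : Fin 4), k) m = 0 := by
    by_contra hne
    have h0 : Rtier x y ((0 : Fin 4), k) ((1 : Fin 4), l) = 0 := by
      simp [Rtier, hx]
    have := hmono ((0 : Fin 4), k) ((1 : Fin 4), l) m (by simp)
      (fun hc => hnf _ (hm ▸ hc)) (by omega)
    omega
  have hm1 : m.1 = 1 ∧ x k m.2 = true := by
    by_contra hc
    unfold Rtier at htier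
    rw [if_pos rfl, if_neg hc] at htier
    split at htier <;> omega
  set j := m.2 with hj
  have hmval : m = ((1 : Fin 4), j) := by
    rw [Prod.ext_iff]; exact ⟨hm1.1, rfl⟩
  have hjl : j ≠ l := by
    intro h
    exact hak_ne_bl (by rw [← hm, hmval, h])
  have hyj : y k j = false := by
    rcases Bool.eq_false_or_eq_true (y k j) with h | h
    · exact absurd ⟨hm1.2, h⟩ (huniq k j (by simp [hjl]))
    · exact h
  -- M (1,j) = (0,k)
  have hMbj : M ((1 : Fin 4), j) = ((0 : Fin 4), k) := by
    have := hinv ((0 : Fin 4), k)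
    rw [← hm, hmval] at this
    exact this
  -- blocking pair (b_j, d_j)
  have hMdj_ne : M ((3 : Fin 4), j) ≠ ((1 : Fin 4), j) := by
    intro h
    have := hinv ((3 : Fin 4), j)
    rw [h, hMbj] at this
    exact absurd this (by simp [Prod.ext_iff])
  apply hstab ((1 : Fin 4), j) ((3 : Fin 4), j)
  refine ⟨by simp, by rw [hMbj]; simp, ?_, ?_⟩
  · rw [hMbj]
    apply hmono _ _ _ (by simp) (by simp)
    simp [Rtier, hyj]
  · apply hmono _ _ _ (by simp) (fun hc => hnf _ hc)
    have h0 : Rtier x y ((3 : Fin 4), j) ((1 : Fin 4), j) = 0 := by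
      simp [Rtier]
    rw [h0]
    simp only [Rtier]
    rw [if_neg (by decide), if_neg (by decide), if_neg (by decide),
      if_neg (fun hc : _ ∧ _ => hMdj_ne (Prod.ext hc.1 hc.2))]
    omega
end

section
/- In the instance R(x,y) with x and y uniquely intersecting at (k,ℓ), in any perfect matching M that contains all pairs {a_i, c_i} for i ≠ k and all pairs {b_j, d_j} for j ≠ ℓ, the remaining agents a_k, c_k, b_ℓ, d_ℓ must be matched among themselves, and each of the three possible matchings on {a_k, c_k, b_ℓ, d_ℓ} is blocked by some pair (so M is not stable). -/
/-- With `x, y` uniquely intersecting at `(k, l)`, any perfect matching containing all pairs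
`{aᵢ, cᵢ}` for `i ≠ k` and `{bⱼ, dⱼ}` for `j ≠ l` matches `a_k, c_k, b_l, d_l` among
themselves and has a blocking pair (hence is not stable). -/
theorem stmt16 {n : ℕ} (x y : Fin n → Fin n → Bool)
    (rank : Fin 4 × Fin n → Fin 4 × Fin n → ℕ) (hpref : IsRPref x y rank)
    (k l : Fin n) (hx : x k l = true) (hy : y k l = true)
    (huniq : ∀ i j, (i, j) ≠ (k, l) → ¬ (x i j = true ∧ y i j = true))
    (M : Fin 4 × Fin n → Fin 4 × Fin n) (hM : IsMatching M)
    (hAC : ∀ i : Fin n, i ≠ k → M ((0 : Fin 4), i) = ((2 : Fin 4), i))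
    (hBD : ∀ j : Fin n, j ≠ l → M ((1 : Fin 4), j) = ((3 : Fin 4), j)) :
    (∀ u ∈ ({((0 : Fin 4), k), ((2 : Fin 4), k), ((1 : Fin 4), l), ((3 : Fin 4), l)} :
        Set (Fin 4 × Fin n)),
      M u ∈ ({((0 : Fin 4), k), ((2 : Fin 4), k), ((1 : Fin 4), l), ((3 : Fin 4), l)} :
        Set (Fin 4 × Fin n))) ∧
    (∃ u v, Blocks rank M u v) ∧ ¬ IsStable rank M := by
  obtain ⟨hinv, hnf⟩ := hM
  have hCA : ∀ i : Fin n, i ≠ k → M ((2 : Fin 4), i) = ((0 : Fin 4), i) := by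
    intro i hi; have := hinv ((0 : Fin 4), i); rw [hAC i hi] at this; exact this
  have hDB : ∀ j : Fin n, j ≠ l → M ((3 : Fin 4), j) = ((1 : Fin 4), j) := by
    intro j hj; have := hinv ((1 : Fin 4), j); rw [hBD j hj] at this; exact this
  have h4 : ∀ t : Fin 4, t = 0 ∨ t = 1 ∨ t = 2 ∨ t = 3 := by decide
  have hclose : ∀ u ∈ ({((0 : Fin 4), k), ((2 : Fin 4), k), ((1 : Fin 4), l), ((3 : Fin 4), l)} :
      Set (Fin 4 × Fin n)),
      M u ∈ ({((0 : Fin 4), k), ((2 : Fin 4), k), ((1 : Fin 4), l), ((3 : Fin 4), l)} :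
      Set (Fin 4 × Fin n)) := by
    intro u hu
    have hMu : M (M u) = u := hinv u
    have hv : M u = ((M u).1, (M u).2) := rfl
    simp only [Set.mem_insert_iff, Set.mem_singleton_iff] at hu ⊢
    rcases h4 (M u).1 with h1 | h1 | h1 | h1
    · left
      by_cases h2 : (M u).2 = k
      · rw [hv, h1, h2]
      · exfalso
        rw [hv, h1] at hMu
        rw [hAC _ h2] at hMu
        rw [← hMu] at hu
        simp at hu
        exact h2 hu
    · right; right; left
      by_cases h2 : (M u).2 = l
      · rw [hv, h1, h2]
      · exfalso
        rw [hv, h1] at hMu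
        rw [hBD _ h2] at hMu
        rw [← hMu] at hu
        simp at hu
        exact h2 hu
    · right; left
      by_cases h2 : (M u).2 = k
      · rw [hv, h1, h2]
      · exfalso
        rw [hv, h1] at hMu
        rw [hCA _ h2] at hMu
        rw [← hMu] at hu
        simp at hu
        exact h2 hu
    · right; right; right
      by_cases h2 : (M u).2 = l
      · rw [hv, h1, h2]
      · exfalso
        rw [hv, h1] at hMu
        rw [hDB _ h2] at hMu
        rw [← hMu] at hu
        simp at hu
        exact h2 hu
  refine ⟨hclose, ?_⟩
  obtain ⟨hmono, _⟩ := hpref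
  -- determine M on the four special agents
  have ha : M ((0 : Fin 4), k) ∈ _ := hclose ((0 : Fin 4), k) (by simp)
  simp only [Set.mem_insert_iff, Set.mem_singleton_iff] at ha
  have suff : ∀ u v, Blocks rank M u v → (∃ u v, Blocks rank M u v) ∧ ¬ IsStable rank M := by
    intro u v hb
    exact ⟨⟨u, v, hb⟩, fun hs => hs.2 u v hb⟩
  rcases ha with ha | ha | ha | ha
  · exact absurd ha (hnf _)
  · -- M a_k = c_k ; then M b_l = d_l ; block (a_k, b_l)
    have hb : M ((1 : Fin 4), l) = ((3 : Fin 4), l) := by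
      have hbm := hclose ((1 : Fin 4), l) (by simp)
      simp only [Set.mem_insert_iff, Set.mem_singleton_iff] at hbm
      rcases hbm with h | h | h | h
      · exfalso; have := hinv ((1 : Fin 4), l); rw [h, ha] at this; simp at this
      · exfalso; have h2 := hinv ((0 : Fin 4), k)
        rw [ha] at h2
        have := hinv ((1 : Fin 4), l); rw [h, h2] at this; simp at this
      · exact absurd h (hnf _)
      · exact h
    apply suff ((0 : Fin 4), k) ((1 : Fin 4), l)
    refine ⟨by simp, by rw [ha]; simp, ?_, ?_⟩
    · rw [ha]
      apply hmono <;> simp [Rtier, hx]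
    · rw [hb]
      apply hmono <;> simp [Rtier, hy]
  · -- M a_k = b_l ; then M c_k = d_l ; block (c_k, b_l)
    have hbl : M ((1 : Fin 4), l) = ((0 : Fin 4), k) := by
      have := hinv ((0 : Fin 4), k); rw [ha] at this; exact this
    have hc : M ((2 : Fin 4), k) = ((3 : Fin 4), l) := by
      have hcm := hclose ((2 : Fin 4), k) (by simp)
      simp only [Set.mem_insert_iff, Set.mem_singleton_iff] at hcm
      rcases hcm with h | h | h | h
      · exfalso; have := hinv ((2 : Fin 4), k); rw [h, ha] at this; simp at this
      · exact absurd h (hnf _)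
      · exfalso; have := hinv ((2 : Fin 4), k); rw [h, hbl] at this; simp at this
      · exact h
    apply suff ((2 : Fin 4), k) ((1 : Fin 4), l)
    refine ⟨by simp, by rw [hc]; simp, ?_, ?_⟩
    · rw [hc]
      apply hmono <;> simp [Rtier]
    · rw [hbl]
      apply hmono <;> simp [Rtier, hy]
  · -- M a_k = d_l ; then M c_k = b_l ; block (a_k, c_k)
    have hdl : M ((3 : Fin 4), l) = ((0 : Fin 4), k) := by
      have := hinv ((0 : Fin 4), k); rw [ha] at this; exact this
    have hc : M ((2 : Fin 4), k) = ((1 : Fin 4), l) := by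
      have hcm := hclose ((2 : Fin 4), k) (by simp)
      simp only [Set.mem_insert_iff, Set.mem_singleton_iff] at hcm
      rcases hcm with h | h | h | h
      · exfalso; have := hinv ((2 : Fin 4), k); rw [h, ha] at this; simp at this
      · exact absurd h (hnf _)
      · exact h
      · exfalso; have := hinv ((2 : Fin 4), k); rw [h, hdl] at this; simp at this
    apply suff ((0 : Fin 4), k) ((2 : Fin 4), k)
    refine ⟨by simp, by rw [ha]; simp, ?_, ?_⟩
    · rw [ha]
      apply hmono <;> simp [Rtier]
    · rw [hc]
      apply hmono <;> simp [Rtier]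
end
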